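/- The Mrugala metric g^M = (1/2)(dx^a ⊗ dy_a + dy_a ⊗ dx^a) + λ⊗λ with λ = dz − y_a dx^a has signature (n+1, n): at each point of {y_a > 0} ⊂ ℝ^{2n+1} it is a nondegenerate symmetric bilinear form with n+1 positive and n negative eigenvalues. -/
import Mathlib


/-- Tangent vectors on ℝ^{2n+1}: (dx-components, dy-components, dz-component). -/
abbrev TVec (n : ℕ) : Type := (Fin n → ℝ) × (Fin n → ℝ) × ℝ

/-- The contact form λ = dz − y_a dx^a. -/
def lamForm {n : ℕ} (y : Fin n → ℝ) (v : TVec n) : ℝ :=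
  v.2.2 - ∑ a, y a * v.1 a

/-- The Mrugala metric g^M = (1/2)(dx^a⊗dy_a + dy_a⊗dx^a) + λ⊗λ. -/
noncomputable def gM {n : ℕ} (y : Fin n → ℝ) (u v : TVec n) : ℝ :=
  (1 / 2) * ∑ a, (u.1 a * v.2.1 a + u.2.1 a * v.1 a) + lamForm y u * lamForm y v

def pvec {n : ℕ} (y : Fin n → ℝ) (a : Fin n) : TVec n := (Pi.single a 1, Pi.single a 1, y a)
def mvec {n : ℕ} (y : Fin n → ℝ) (a : Fin n) : TVec n := (Pi.single a 1, Pi.single a (-1), y a)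
def zvec (n : ℕ) : TVec n := (0, 0, 1)

variable {n : ℕ} (y : Fin n → ℝ)

lemma sum_single_mul (a b : Fin n) (s t : ℝ) :
    ∑ x, Pi.single a s x * Pi.single b t x = if a = b then s * t else 0 := by
  simp [Pi.single_apply, ite_mul, mul_ite, Finset.sum_ite_eq', eq_comm]

@[simp] lemma lam_pvec (a : Fin n) : lamForm y (pvec y a) = 0 := by
  simp [lamForm, pvec, Pi.single_apply, mul_ite, Finset.sum_ite_eq']

@[simp] lemma lam_mvec (a : Fin n) : lamForm y (mvec y a) = 0 := by
  simp [lamForm, mvec, Pi.single_apply, mul_ite, Finset.sum_ite_eq']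

@[simp] lemma lam_zvec : lamForm y (zvec n) = 1 := by
  simp [lamForm, zvec]

lemma gpp (a b : Fin n) : gM y (pvec y a) (pvec y b) = if a = b then 1 else 0 := by
  simp only [gM, lam_pvec, mul_zero, add_zero]
  simp only [pvec, Finset.sum_add_distrib, sum_single_mul]
  split <;> norm_num

lemma gmm (a b : Fin n) : gM y (mvec y a) (mvec y b) = if a = b then -1 else 0 := by
  simp only [gM, lam_mvec, mul_zero, add_zero]
  simp only [mvec, Finset.sum_add_distrib, sum_single_mul]
  split <;> norm_num

lemma gpm (a b : Fin n) : gM y (pvec y a) (mvec y b) = 0 := by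
  simp only [gM, lam_pvec, lam_mvec, mul_zero, add_zero]
  simp only [pvec, mvec, Finset.sum_add_distrib, sum_single_mul]
  split <;> norm_num

lemma gpz (a : Fin n) : gM y (pvec y a) (zvec n) = 0 := by
  simp only [gM, lam_pvec, lam_zvec, zero_mul, add_zero]
  simp [pvec, zvec]

lemma gmz (a : Fin n) : gM y (mvec y a) (zvec n) = 0 := by
  simp only [gM, lam_mvec, lam_zvec, zero_mul, add_zero]
  simp [mvec, zvec]

lemma gzz : gM y (zvec n) (zvec n) = 1 := by
  simp [gM, zvec, lamForm]

lemma gsymm (u v : TVec n) : gM y u v = gM y v u := by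
  simp only [gM]
  rw [mul_comm (lamForm y u)]
  congr 1
  congr 1
  exact Finset.sum_congr rfl fun a _ => by ring

noncomputable def bas (y : Fin n → ℝ) (i : Fin (n + 1 + n)) : TVec n :=
  if h : (i : ℕ) < n then pvec y ⟨i, h⟩
  else if h2 : (i : ℕ) < n + 1 then zvec n
  else mvec y ⟨(i : ℕ) - (n + 1), by omega⟩

lemma bas_p (a : Fin n) : bas y ⟨a.1, by omega⟩ = pvec y a := by
  simp only [bas]
  rw [dif_pos a.2]

lemma bas_z (h : n < n + 1 + n) : bas y ⟨n, h⟩ = zvec n := by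
  simp only [bas]
  rw [dif_neg (by omega), dif_pos (by omega)]

lemma bas_m (a : Fin n) : bas y ⟨n + 1 + a.1, by omega⟩ = mvec y a := by
  simp only [bas]
  rw [dif_neg (by omega), dif_neg (by omega)]
  congr 1
  exact Fin.ext (by simp)

lemma bas_orth (i j : Fin (n + 1 + n)) (hij : i ≠ j) : gM y (bas y i) (bas y j) = 0 := by
  have hval : (i : ℕ) ≠ (j : ℕ) := fun h => hij (Fin.ext h)
  simp only [bas]
  by_cases hi : (i : ℕ) < n <;> by_cases hj : (j : ℕ) < n <;>
    simp only [dif_pos, dif_neg, hi, hj, dite_true, dite_false]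
  · rw [gpp, if_neg (fun h => hval (by simpa using congrArg Fin.val h))]
  · by_cases hj2 : (j : ℕ) < n + 1 <;> simp only [hj2, dite_true, dite_false]
    · exact gpz y _
    · exact gpm y _ _
  · by_cases hi2 : (i : ℕ) < n + 1 <;> simp only [hi2, dite_true, dite_false]
    · rw [gsymm]; exact gpz y _
    · rw [gsymm]; exact gpm y _ _
  · by_cases hi2 : (i : ℕ) < n + 1 <;> by_cases hj2 : (j : ℕ) < n + 1 <;>
      simp only [hi2, hj2, dite_true, dite_false]
    · omega
    · rw [gsymm]; exact gmz y _
    · exact gmz y _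
    · rw [gmm, if_neg (fun h => hval (by have := congrArg Fin.val h; simp at this; omega))]

lemma bas_norm (i : Fin (n + 1 + n)) :
    gM y (bas y i) (bas y i) = if (i : ℕ) < n + 1 then 1 else -1 := by
  simp only [bas]
  by_cases hi : (i : ℕ) < n <;> simp only [hi, dite_true, dite_false]
  · rw [gpp, if_pos rfl, if_pos (by omega)]
  · by_cases hi2 : (i : ℕ) < n + 1 <;> simp only [hi2, dite_true, dite_false, if_true, if_false]
    · exact gzz y
    · rw [gmm, if_pos rfl]

lemma nondeg (v : TVec n) (h : ∀ w, gM y v w = 0) : v = 0 := by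
  have hlam : lamForm y v = 0 := by
    have := h (zvec n)
    simpa [gM, zvec, lamForm] using this
  have hx : ∀ a, v.1 a = 0 := by
    intro a
    have := h ((0, Pi.single a 1, 0) : TVec n)
    simp [gM, lamForm, Pi.single_apply, mul_ite, Finset.sum_ite_eq'] at this
    exact this
  have hy2 : ∀ a, v.2.1 a = 0 := by
    intro a
    have := h ((Pi.single a 1, 0, 0) : TVec n)
    simp only [gM, hlam, zero_mul, add_zero] at this
    simpa [Pi.single_apply, mul_ite, Finset.sum_ite_eq'] using this
  have hz2 : v.2.2 = 0 := by
    have h2 := hlam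
    simp [lamForm, hx] at h2
    exact h2
  refine Prod.ext ?_ (Prod.ext ?_ ?_)
  · funext a; exact hx a
  · funext a; exact hy2 a
  · exact hz2

lemma bas_span : Submodule.span ℝ (Set.range (bas y)) = ⊤ := by
  set S := Submodule.span ℝ (Set.range (bas y)) with hS
  have hp : ∀ a : Fin n, pvec y a ∈ S := fun a =>
    bas_p y a ▸ Submodule.subset_span (Set.mem_range_self _)
  have hm : ∀ a : Fin n, mvec y a ∈ S := fun a =>
    bas_m y a ▸ Submodule.subset_span (Set.mem_range_self _)
  have hz : zvec n ∈ S :=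
    bas_z y (by omega) ▸ Submodule.subset_span (Set.mem_range_self _)
  have hY : ∀ a : Fin n, ((0, Pi.single a 1, 0) : TVec n) ∈ S := by
    intro a
    have h1 : ((0, Pi.single a 1, 0) : TVec n) = (2⁻¹ : ℝ) • (pvec y a - mvec y a) := by
      refine Prod.ext ?_ (Prod.ext ?_ ?_)
      · funext x; simp [pvec, mvec, Prod.smul_def, Pi.single_apply]
      · funext x
        simp only [pvec, mvec, Prod.smul_def, Prod.mk_sub_mk, Prod.smul_mk, Pi.sub_apply,
          Pi.smul_apply, Pi.single_apply, smul_eq_mul]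
        split <;> ring
      · simp [pvec, mvec, Prod.smul_def]
    rw [h1]
    exact Submodule.smul_mem _ _ (Submodule.sub_mem _ (hp a) (hm a))
  have hX : ∀ a : Fin n, ((Pi.single a 1, 0, 0) : TVec n) ∈ S := by
    intro a
    have h1 : ((Pi.single a 1, 0, 0) : TVec n)
        = (2⁻¹ : ℝ) • (pvec y a + mvec y a) - y a • zvec n := by
      refine Prod.ext ?_ (Prod.ext ?_ ?_)
      · funext x
        simp only [pvec, mvec, zvec, Prod.smul_def, Prod.mk_add_mk, Prod.smul_mk,
          Prod.mk_sub_mk, Pi.add_apply, Pi.sub_apply, Pi.smul_apply, Pi.single_apply,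
          smul_eq_mul, smul_zero, Pi.zero_apply]
        split <;> ring
      · funext x
        simp [pvec, mvec, zvec, Prod.smul_def, Pi.single_apply]
        split <;> ring
      · simp only [pvec, mvec, zvec, Prod.smul_def, Prod.mk_add_mk, Prod.smul_mk,
          Prod.mk_sub_mk, smul_eq_mul, smul_zero]
        ring
    rw [h1]
    exact Submodule.sub_mem _
      (Submodule.smul_mem _ _ (Submodule.add_mem _ (hp a) (hm a)))
      (Submodule.smul_mem _ _ hz)
  rw [Submodule.eq_top_iff']
  intro v
  have hv : v = (∑ a, v.1 a • ((Pi.single a 1, 0, 0) : TVec n))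
      + (∑ a, v.2.1 a • ((0, Pi.single a 1, 0) : TVec n)) + v.2.2 • zvec n := by
    refine Prod.ext ?_ (Prod.ext ?_ ?_) <;>
      simp [zvec, Prod.smul_def, Prod.fst_sum, Prod.snd_sum]
    · funext x
      simp [Pi.single_apply, mul_ite, Finset.sum_ite_eq', Finset.sum_apply]
    · funext x
      simp [Pi.single_apply, mul_ite, Finset.sum_ite_eq', Finset.sum_apply]
  rw [hv]
  exact Submodule.add_mem _
    (Submodule.add_mem _
      (Submodule.sum_mem _ fun a _ => Submodule.smul_mem _ _ (hX a))
      (Submodule.sum_mem _ fun a _ => Submodule.smul_mem _ _ (hY a)))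
    (Submodule.smul_mem _ _ hz)

/-- at each point of {y_a > 0}, the Mrugala metric is a
nondegenerate symmetric bilinear form of signature (n+1, n): there is an
orthogonal basis with n+1 vectors of norm +1 and n vectors of norm −1. -/
theorem mrugala_metric_signature {n : ℕ} (y : Fin n → ℝ) (hy : ∀ a, 0 < y a) :
    (∀ u v : TVec n, gM y u v = gM y v u) ∧
    (∀ v : TVec n, (∀ w, gM y v w = 0) → v = 0) ∧
    ∃ b : Fin (n + 1 + n) → TVec n,
      Submodule.span ℝ (Set.range b) = ⊤ ∧
      (∀ i j, i ≠ j → gM y (b i) (b j) = 0) ∧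
      (∀ i : Fin (n + 1 + n),
        gM y (b i) (b i) = if (i : ℕ) < n + 1 then 1 else -1) := by
  exact ⟨gsymm y, nondeg y, bas y, bas_span y, bas_orth y, bas_norm y⟩
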